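/- Let C > 4, let λ(t) = C√(1−t) for t ∈ [0,1], and set A = (C + √(C² − 16))/2. Then every real x ∈ [A, C) is captured by λ at time 1: the real solution g_t(x) of ∂_t g_t(x) = 2/(g_t(x) − λ(t)), g_0(x) = x, exists for all t ∈ [0,1) and g_t(x) − λ(t) → 0 as t → 1⁻. Moreover x_s := e^{s/2} g_{1−e^{−s}}(x) is nonincreasing in s and x_s → A as s → ∞. -/

import Mathlib

open Set Filter Topology

noncomputable section

/-- `HalfLipOn lam S C` : `lam` is Lip(1/2) on `S` with constant `C`. -/
def HalfLipOn (lam : ℝ → ℝ) (S : Set ℝ) (C : ℝ) : Prop :=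
  ∀ s ∈ S, ∀ t ∈ S, |lam t - lam s| ≤ C * Real.sqrt |t - s|

/-- `RealLoewnerSolOn lam x g s` means that the real-valued function `g` solves the chordal
Loewner equation `∂ₜ g t = 2 / (g t - lam t)`, `g 0 = x`, on the time interval `[0, s)`
(one-sided derivative at `0`). -/
def RealLoewnerSolOn (lam : ℝ → ℝ) (x : ℝ) (g : ℝ → ℝ) (s : ℝ) : Prop :=
  g 0 = x ∧ ∀ t ∈ Set.Ico (0 : ℝ) s,
    g t ≠ lam t ∧ HasDerivWithinAt g (2 / (g t - lam t)) (Set.Ici 0) t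

lemma aux_main (A B C x : ℝ) (hB : 0 < B) (hBA : B < A) (hAC : A < C)
    (hsum : A + B = C) (hprod : A * B = 4) (hxA : A < x) (hxC : x < C) :
    ∃ g : ℝ → ℝ,
      RealLoewnerSolOn (fun t => C * Real.sqrt (1 - t)) x g 1 ∧
      Tendsto (fun t => g t - C * Real.sqrt (1 - t)) (nhdsWithin 1 (Set.Iio 1)) (nhds 0) ∧
      AntitoneOn (fun s => Real.exp (s / 2) * g (1 - Real.exp (-s))) (Set.Ici 0) ∧
      Tendsto (fun s => Real.exp (s / 2) * g (1 - Real.exp (-s))) atTop (nhds A) := by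
  set D := A - B with hDdef
  have hD : 0 < D := by simp only [hDdef]; linarith
  set Φ : ℝ → ℝ := fun y => (2*A/D) * Real.log (y - B) - (2*B/D) * Real.log (y - A) with hΦdef
  have hΦderiv : ∀ y ∈ Set.Ioc A C, HasDerivAt Φ (2*(y-C)/((y-A)*(y-B))) y := by
    intro y hy
    have hyA : 0 < y - A := sub_pos.2 hy.1
    have hyB : 0 < y - B := by linarith [hy.1]
    have h1 : HasDerivAt (fun y => Real.log (y - B)) (1/(y-B)) y := by
      have := (Real.hasDerivAt_log hyB.ne').comp y ((hasDerivAt_id y).sub_const B)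
      simpa [one_div, Function.comp_def] using this
    have h2 : HasDerivAt (fun y => Real.log (y - A)) (1/(y-A)) y := by
      have := (Real.hasDerivAt_log hyA.ne').comp y ((hasDerivAt_id y).sub_const A)
      simpa [one_div, Function.comp_def] using this
    have h3 := ((h1.const_mul (2*A/D)).sub (h2.const_mul (2*B/D)))
    refine h3.congr_deriv ?_
    rw [hDdef, ← hsum]
    have hAB : A - B ≠ 0 := sub_ne_zero.2 hBA.ne'
    field_simp
    ring
  have hΦcont : ContinuousOn Φ (Set.Ioc A C) := fun y hy =>
    ((hΦderiv y hy).continuousAt).continuousWithinAt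
  have hΦanti : StrictAntiOn Φ (Set.Ioc A C) := by
    apply strictAntiOn_of_deriv_neg (convex_Ioc A C) hΦcont
    intro y hy
    rw [interior_Ioc] at hy
    rw [(hΦderiv y (Set.Ioo_subset_Ioc_self hy)).deriv]
    apply div_neg_of_neg_of_pos
    · linarith [hy.2]
    · have : 0 < y - A := sub_pos.2 hy.1
      have : 0 < y - B := by linarith [hy.1]
      positivity
  -- tendsto atTop near A
  have htend : Tendsto Φ (nhdsWithin A (Set.Ioi A)) atTop := by
    have hinner : Tendsto (fun y => y - A) (nhdsWithin A (Set.Ioi A)) (nhdsWithin 0 (Set.Ioi 0)) := by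
      apply tendsto_nhdsWithin_of_tendsto_nhds_of_eventually_within
      · exact ((continuous_id.sub continuous_const).tendsto' A 0 (by simp)).mono_left
          nhdsWithin_le_nhds
      · filter_upwards [self_mem_nhdsWithin] with y hy
        exact sub_pos.2 (Set.mem_Ioi.1 hy)
    have t1 : Tendsto (fun y => Real.log (y - A)) (nhdsWithin A (Set.Ioi A)) atBot :=
      Real.tendsto_log_nhdsGT_zero.comp hinner
    have t2 : Tendsto (fun y => -((2*B/D) * Real.log (y - A))) (nhdsWithin A (Set.Ioi A)) atTop := by
      have := t1.const_mul_atBot (by positivity : (0:ℝ) < 2*B/D)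
      exact tendsto_neg_atBot_atTop.comp this
    have t3 : Tendsto (fun y => (2*A/D) * Real.log (y - B)) (nhdsWithin A (Set.Ioi A))
        (nhds ((2*A/D) * Real.log (A - B))) := by
      have hca : ContinuousAt (fun y => (2*A/D) * Real.log (y - B)) A := by
        have h1 : A - B ≠ 0 := by linarith
        have h0 : ContinuousAt (fun y : ℝ => y - B) A := continuousAt_id.sub continuousAt_const
        have h2 : ContinuousAt (fun y : ℝ => Real.log (y - B)) A := h0.log h1
        exact h2.const_mul _
      exact hca.tendsto.mono_left nhdsWithin_le_nhds
    have : Tendsto Φ (nhdsWithin A (Set.Ioi A)) atTop := by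
      rw [hΦdef]
      have heq : (fun y => (2*A/D) * Real.log (y - B) - (2*B/D) * Real.log (y - A))
          = fun y => (2*A/D) * Real.log (y - B) + -((2*B/D) * Real.log (y - A)) := by
        funext y; ring
      rw [heq]
      exact t3.add_atTop t2
    exact this
  -- surjectivity onto [Φ C, ∞)
  have hsurj : ∀ v, Φ C ≤ v → ∃ y ∈ Set.Ioc A C, Φ y = v := by
    intro v hv
    obtain ⟨y₀, hy₀v, hy₀⟩ := ((htend.eventually_ge_atTop v).and
      (Ioo_mem_nhdsGT_of_mem ⟨le_refl A, hAC⟩)).exists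
    have hy₀AC : y₀ ∈ Set.Ioc A C := ⟨hy₀.1, hy₀.2.le⟩
    have hsub : Set.Icc y₀ C ⊆ Set.Ioc A C := fun z hz => ⟨lt_of_lt_of_le hy₀.1 hz.1, hz.2⟩
    have hmem : v ∈ Set.Icc (Φ C) (Φ y₀) := ⟨hv, hy₀v⟩
    have := intermediate_value_Icc' hy₀.2.le (hΦcont.mono hsub)
    obtain ⟨y, hy, hyv⟩ := this hmem
    exact ⟨y, hsub hy, hyv⟩
  set X : ℝ → ℝ := fun s => Function.invFunOn Φ (Set.Ioc A C) (s + Φ x) with hXdef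
  have hsneg : Φ C - Φ x < 0 := by
    have := hΦanti ⟨hxA, hxC.le⟩ ⟨hAC, le_refl C⟩ hxC
    linarith
  have hXfull : ∀ s, Φ C - Φ x ≤ s → X s ∈ Set.Ioc A C ∧ Φ (X s) = s + Φ x := by
    intro s hs
    have hex := hsurj (s + Φ x) (by linarith)
    exact ⟨Function.invFunOn_mem hex, Function.invFunOn_eq hex⟩
  have hXuniq : ∀ s y, Φ C - Φ x ≤ s → y ∈ Set.Ioc A C → Φ y = s + Φ x → X s = y := by
    intro s y hs hy hΦy
    exact hΦanti.injOn (hXfull s hs).1 hy ((hXfull s hs).2.trans hΦy.symm)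
  have hX0 : X 0 = x := hXuniq 0 x hsneg.le ⟨hxA, hxC.le⟩ (by ring)
  have hXlt : ∀ s, Φ C - Φ x < s → X s < C := by
    intro s hs
    rcases lt_or_eq_of_le (hXfull s hs.le).1.2 with h | h
    · exact h
    · exfalso
      have := (hXfull s hs.le).2
      rw [h] at this
      linarith
  have hXanti : ∀ s₁ s₂, Φ C - Φ x ≤ s₁ → s₁ < s₂ → X s₂ < X s₁ := by
    intro s₁ s₂ h1 h12
    have hm1 := hXfull s₁ h1
    have hm2 := hXfull s₂ (h1.trans h12.le)
    by_contra h
    push_neg at h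
    rcases lt_or_eq_of_le h with h | h
    · have := hΦanti hm1.1 hm2.1 h
      rw [hm1.2, hm2.2] at this
      linarith
    · rw [h] at hm1
      rw [hm2.2] at hm1
      have := hm1.2
      linarith
  -- continuity
  have hXcont : ∀ s, Φ C - Φ x < s → ContinuousAt X s := by
    intro s hs
    have hmem := hXfull s hs.le
    have hXsC : X s < C := hXlt s hs
    have hXsA : A < X s := hmem.1.1
    rw [Metric.continuousAt_iff]
    intro ε hε
    set y₁ := X s - min ε (X s - A) / 2 with hy₁def
    set y₂ := X s + min ε (C - X s) / 2 with hy₂def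
    have hy₁mem : y₁ ∈ Set.Ioc A C := by
      constructor
      · have : min ε (X s - A) ≤ X s - A := min_le_right _ _
        have h2 : 0 < min ε (X s - A) := lt_min hε (by linarith)
        simp only [hy₁def]; linarith
      · have h2 : 0 < min ε (X s - A) := lt_min hε (by linarith)
        simp only [hy₁def]; linarith
    have hy₂mem : y₂ ∈ Set.Ioc A C := by
      have : min ε (C - X s) ≤ C - X s := min_le_right _ _
      have h2 : 0 < min ε (C - X s) := lt_min hε (by linarith)
      constructor
      · simp only [hy₂def]; linarith
      · simp only [hy₂def]; linarith
    have hy₁lt : y₁ < X s := by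
      have h2 : 0 < min ε (X s - A) := lt_min hε (by linarith)
      simp only [hy₁def]; linarith
    have hy₂gt : X s < y₂ := by
      have h2 : 0 < min ε (C - X s) := lt_min hε (by linarith)
      simp only [hy₂def]; linarith
    have hΦ₁ : s + Φ x < Φ y₁ := by
      have := hΦanti hy₁mem hmem.1 hy₁lt
      rw [hmem.2] at this; linarith
    have hΦ₂ : Φ y₂ < s + Φ x := by
      have := hΦanti hmem.1 hy₂mem hy₂gt
      rw [hmem.2] at this; linarith
    refine ⟨min (min (Φ y₁ - (s + Φ x)) ((s + Φ x) - Φ y₂)) (s - (Φ C - Φ x)), by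
      apply lt_min (lt_min (by linarith) (by linarith)) (by linarith), ?_⟩
    intro s' hs'
    rw [Real.dist_eq] at hs'
    have hd1 : |s' - s| < Φ y₁ - (s + Φ x) := lt_of_lt_of_le hs' (le_trans (min_le_left _ _) (min_le_left _ _))
    have hd2 : |s' - s| < (s + Φ x) - Φ y₂ := lt_of_lt_of_le hs' (le_trans (min_le_left _ _) (min_le_right _ _))
    have hd3 : |s' - s| < s - (Φ C - Φ x) := lt_of_lt_of_le hs' (min_le_right _ _)
    rw [abs_lt] at hd1 hd2 hd3
    have hs'big : Φ C - Φ x < s' := by linarith [hd3.1]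
    have hm' := hXfull s' hs'big.le
    have hup : Φ (X s') < Φ y₁ := by rw [hm'.2]; linarith [hd1.2]
    have hlo : Φ y₂ < Φ (X s') := by rw [hm'.2]; linarith [hd2.1]
    have h1 : y₁ < X s' := by
      by_contra h
      push_neg at h
      rcases lt_or_eq_of_le h with h | h
      · have := hΦanti hm'.1 hy₁mem h; linarith
      · rw [h] at hup; linarith
    have h2 : X s' < y₂ := by
      by_contra h
      push_neg at h
      rcases lt_or_eq_of_le h with h | h
      · have := hΦanti hy₂mem hm'.1 h; linarith
      · rw [← h] at hlo; linarith
    rw [Real.dist_eq, abs_lt]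
    constructor
    · have : min ε (X s - A) ≤ ε := min_le_left _ _
      simp only [hy₁def] at h1; linarith
    · have : min ε (C - X s) ≤ ε := min_le_left _ _
      simp only [hy₂def] at h2; linarith
  -- derivative
  have hXderiv : ∀ s, Φ C - Φ x < s →
      HasDerivAt X ((X s - A) * (X s - B) / (2 * (X s - C))) s := by
    intro s hs
    have hmem := hXfull s hs.le
    have hyA : A < X s := hmem.1.1
    have hyC : X s < C := hXlt s hs
    have hyB : B < X s := hBA.trans hyA
    have hfd : HasDerivAt (fun z => Φ z - Φ x) (2*(X s - C)/((X s - A)*(X s - B))) (X s) :=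
      (hΦderiv (X s) hmem.1).sub_const _
    have hne : 2*(X s - C)/((X s - A)*(X s - B)) ≠ 0 := by
      apply div_ne_zero (by linarith)
      have h1 : 0 < X s - A := by linarith
      have h2 : 0 < X s - B := by linarith
      positivity
    have hfg : ∀ᶠ s' in nhds s, Φ (X s') - Φ x = s' := by
      filter_upwards [Ioi_mem_nhds hs] with s' hs'
      rw [(hXfull s' (le_of_lt hs')).2]; ring
    have := HasDerivAt.of_local_left_inverse (hXcont s hs) hfd hne hfg
    rwa [inv_div] at this
  -- limit
  have hXtendA : Tendsto X atTop (nhds A) := by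
    rw [Metric.tendsto_atTop]
    intro ε hε
    set y := A + min ε (C - A) / 2 with hydef
    have hymem : y ∈ Set.Ioc A C := by
      have h1 : 0 < min ε (C - A) := lt_min hε (by linarith)
      have h2 : min ε (C - A) ≤ C - A := min_le_right _ _
      constructor
      · simp only [hydef]; linarith
      · simp only [hydef]; linarith
    refine ⟨max (Φ y - Φ x) 1, ?_⟩
    intro s hsN
    have hs1 : (1:ℝ) ≤ s := le_trans (le_max_right _ _) hsN
    have hs : Φ C - Φ x < s := by linarith [hsneg]
    have hm := hXfull s hs.le
    have hΦge : Φ y ≤ Φ (X s) := by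
      rw [hm.2]
      have : Φ y - Φ x ≤ s := le_trans (le_max_left _ _) hsN
      linarith
    have hle : X s ≤ y := by
      by_contra h
      push_neg at h
      have := hΦanti hymem hm.1 h
      linarith
    rw [Real.dist_eq, abs_lt]
    have h1 : min ε (C - A) ≤ ε := min_le_left _ _
    have h2 : 0 < min ε (C - A) := lt_min hε (by linarith)
    constructor
    · linarith [hm.1.1]
    · simp only [hydef] at hle; linarith [hm.1.1]
  set c₀ := Φ C - Φ x with hc₀def
  have hX : ∀ s, c₀ ≤ s → X s ∈ Set.Ioc A C := fun s hs => (hXfull s hs).1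
  set g : ℝ → ℝ := fun t => Real.sqrt (1 - t) * X (-Real.log (1 - t)) with hgdef
  have hgts : ∀ s, Real.exp (s / 2) * g (1 - Real.exp (-s)) = X s := by
    intro s
    have h1 : (1:ℝ) - (1 - Real.exp (-s)) = Real.exp (-s) := by ring
    simp only [hgdef, h1, Real.log_exp, neg_neg]
    rw [← Real.exp_half, ← mul_assoc, ← Real.exp_add]
    rw [show s / 2 + -s / 2 = 0 by ring, Real.exp_zero, one_mul]
  refine ⟨g, ⟨?_, ?_⟩, ?_, ?_, ?_⟩
  · -- initial condition
    simp [hgdef, hX0]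
  · -- ODE
    intro t ht
    obtain ⟨ht0, ht1⟩ := ht
    have h1t : 0 < 1 - t := by linarith
    have hr : 0 < Real.sqrt (1 - t) := Real.sqrt_pos.2 h1t
    have hr2 : Real.sqrt (1 - t) ^ 2 = 1 - t := Real.sq_sqrt h1t.le
    set r := Real.sqrt (1 - t) with hrdef
    set s := -Real.log (1 - t) with hsdef
    have hs0 : 0 ≤ s := neg_nonneg.2 (Real.log_nonpos (by linarith) (by linarith))
    have hsgt : c₀ < s := lt_of_lt_of_le hsneg hs0
    have hXmem := hX s hsgt.le
    have hXsC : X s < C := hXlt s hsgt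
    have hXsA : A < X s := hXmem.1
    have hgt : g t = r * X s := rfl
    have hne : g t - C * Real.sqrt (1 - t) ≠ 0 := by
      rw [hgt, ← hrdef]
      have : r * X s - C * r = r * (X s - C) := by ring
      rw [this]
      exact mul_ne_zero hr.ne' (by linarith)
    refine ⟨by intro h; exact hne (by rw [h]; ring), ?_⟩
    have hds : HasDerivAt (fun u => -Real.log (1 - u)) (1/(1 - t)) t := by
      have h0 : HasDerivAt (fun u : ℝ => 1 - u) (-1) t := by
        simpa using (hasDerivAt_id t).const_sub (1:ℝ)
      have := ((Real.hasDerivAt_log h1t.ne').comp t h0).neg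
      refine this.congr_deriv ?_
      field_simp
    have hXc : HasDerivAt (fun u => X (-Real.log (1 - u)))
        ((X s - A) * (X s - B) / (2 * (X s - C)) * (1/(1-t))) t :=
      by have := (hXderiv s hsgt).comp t hds; exact this
    have hrd : HasDerivAt (fun u => Real.sqrt (1 - u)) (-(1 / (2 * r))) t := by
      have h0 : HasDerivAt (fun u : ℝ => 1 - u) (-1) t := by
        simpa using (hasDerivAt_id t).const_sub (1:ℝ)
      have := (Real.hasDerivAt_sqrt h1t.ne').comp t h0
      refine this.congr_deriv ?_
      rw [← hrdef]; ring
    have hgd : HasDerivAt g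
        (-(1 / (2 * r)) * X s + r * ((X s - A) * (X s - B) / (2 * (X s - C)) * (1/(1-t)))) t := by
      have := hrd.mul hXc
      exact this
    have hquad : (X s - A) * (X s - B) = X s * X s - C * X s + 4 := by
      linear_combination (-(X s)) * hsum + hprod
    have heq : -(1 / (2 * r)) * X s + r * ((X s - A) * (X s - B) / (2 * (X s - C)) * (1/(1-t)))
        = 2 / (g t - C * Real.sqrt (1 - t)) := by
      rw [hgt, ← hrdef]
      have h1t' : 1 - t = r ^ 2 := hr2.symm
      rw [hquad, h1t']
      have hXC' : X s - C ≠ 0 := sub_ne_zero.2 hXsC.ne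
      have h2 : r * X s - C * r = r * (X s - C) := by ring
      rw [h2]
      field_simp
      ring
    rw [← heq]
    exact hgd.hasDerivWithinAt
  · -- capture
    have hc : Tendsto (fun t : ℝ => (C - A) * Real.sqrt (1 - t)) (nhdsWithin 1 (Set.Iio 1)) (nhds 0) := by
      have hcont : Continuous (fun t : ℝ => (C - A) * Real.sqrt (1 - t)) :=
        continuous_const.mul (Real.continuous_sqrt.comp (continuous_const.sub continuous_id))
      have h2 := hcont.tendsto 1
      simp only [Real.sqrt_eq_zero', sub_self, Real.sqrt_zero, mul_zero] at h2
      exact h2.mono_left nhdsWithin_le_nhds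
    have hb : ∀ᶠ t in nhdsWithin 1 (Set.Iio 1),
        ‖g t - C * Real.sqrt (1 - t)‖ ≤ (C - A) * Real.sqrt (1 - t) := by
      filter_upwards [Ioo_mem_nhdsLT_of_mem (⟨by norm_num, le_refl (1:ℝ)⟩ : (1:ℝ) ∈ Set.Ioc 0 1)]
        with t ht
      obtain ⟨ht0, ht1⟩ := ht
      have h1t : 0 < 1 - t := by linarith
      have hr : 0 < Real.sqrt (1 - t) := Real.sqrt_pos.2 h1t
      have hs0 : 0 ≤ -Real.log (1 - t) := neg_nonneg.2 (Real.log_nonpos (by linarith) (by linarith))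
      have hsgt : c₀ < -Real.log (1 - t) := lt_of_lt_of_le hsneg hs0
      have hXmem := hX _ hsgt.le
      have hXsC := hXlt _ hsgt
      have : g t - C * Real.sqrt (1 - t) = Real.sqrt (1 - t) * (X (-Real.log (1-t)) - C) := by
        simp only [hgdef]; ring
      rw [Real.norm_eq_abs, this, abs_mul, abs_of_pos hr, abs_of_neg (by linarith)]
      have : -(X (-Real.log (1-t)) - C) ≤ C - A := by linarith [hXmem.1]
      calc Real.sqrt (1-t) * -(X (-Real.log (1-t)) - C) ≤ Real.sqrt (1-t) * (C - A) :=
            mul_le_mul_of_nonneg_left this hr.le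
        _ = (C - A) * Real.sqrt (1-t) := by ring
    exact squeeze_zero_norm' hb hc
  · -- antitone
    intro a ha b hb hab
    simp only [hgts]
    rcases eq_or_lt_of_le hab with h | h
    · rw [h]
    · exact (hXanti a b (le_trans hsneg.le ha) h).le
  · -- limit
    have : (fun s => Real.exp (s / 2) * g (1 - Real.exp (-s))) = X := funext hgts
    rw [this]
    exact hXtendA

/-- For the driving function `lam(t) = C√(1-t)` with `C > 4`, every real
point `x ∈ [A, C)`, where `A = (C + √(C²-16))/2`, is captured at time `1`; moreover the
time-changed flow `x_s = e^{s/2} g_{1-e^{-s}}(x)` is nonincreasing and converges to `A`. -/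
theorem capture_for_constant_sigma (C : ℝ) (hC : 4 < C) (x : ℝ)
    (hx : x ∈ Set.Ico ((C + Real.sqrt (C ^ 2 - 16)) / 2) C) :
    ∃ g : ℝ → ℝ,
      RealLoewnerSolOn (fun t => C * Real.sqrt (1 - t)) x g 1 ∧
      Tendsto (fun t => g t - C * Real.sqrt (1 - t)) (nhdsWithin 1 (Set.Iio 1)) (nhds 0) ∧
      AntitoneOn (fun s => Real.exp (s / 2) * g (1 - Real.exp (-s))) (Set.Ici 0) ∧
      Tendsto (fun s => Real.exp (s / 2) * g (1 - Real.exp (-s))) atTop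
        (nhds ((C + Real.sqrt (C ^ 2 - 16)) / 2)) := by

  obtain ⟨hxA, hxC⟩ := hx
  set D := Real.sqrt (C ^ 2 - 16) with hDdef
  have h16 : (0:ℝ) < C ^ 2 - 16 := by nlinarith
  have hD2 : D ^ 2 = C ^ 2 - 16 := Real.sq_sqrt h16.le
  have hDpos : 0 < D := Real.sqrt_pos.2 h16
  have hDC : D < C := by nlinarith [hD2, hDpos]
  set A := (C + D) / 2 with hAdef
  set B := (C - D) / 2 with hBdef
  have hB : 0 < B := by rw [hBdef]; linarith
  have hBA : B < A := by rw [hBdef, hAdef]; linarith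
  have hAC : A < C := by rw [hAdef]; linarith
  have hsum : A + B = C := by rw [hAdef, hBdef]; ring
  have hprod : A * B = 4 := by rw [hAdef, hBdef]; linear_combination (-1/4 : ℝ) * hD2
  rcases eq_or_lt_of_le hxA with heq | hlt
  · -- boundary case x = A : explicit solution g t = A * sqrt (1 - t)
    refine ⟨fun t => A * Real.sqrt (1 - t), ⟨?_, ?_⟩, ?_, ?_, ?_⟩
    · simp [← heq]
    · intro t ht
      obtain ⟨ht0, ht1⟩ := ht
      have h1t : 0 < 1 - t := by linarith
      have hr : 0 < Real.sqrt (1 - t) := Real.sqrt_pos.2 h1t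
      set r := Real.sqrt (1 - t) with hrdef
      constructor
      · intro h
        have h' : A * r = C * r := h
        have : (A - C) * r = 0 := by linarith
        rcases mul_eq_zero.1 this with h' | h'
        · linarith
        · linarith
      · have h0 : HasDerivAt (fun u : ℝ => 1 - u) (-1) t := by
          simpa using (hasDerivAt_id t).const_sub (1:ℝ)
        have hrd : HasDerivAt (fun u => Real.sqrt (1 - u)) (-(1 / (2 * r))) t := by
          have := (Real.hasDerivAt_sqrt h1t.ne').comp t h0
          refine this.congr_deriv ?_
          rw [← hrdef]; ring
        have hd : HasDerivAt (fun u => A * Real.sqrt (1 - u)) (A * -(1 / (2 * r))) t :=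
          hrd.const_mul A
        have heq2 : A * -(1 / (2 * r)) = 2 / (A * r - C * r) := by
          rw [show A * r - C * r = -(B * r) by rw [← hsum]; ring]
          have hBr : B * r ≠ 0 := (mul_pos hB hr).ne'
          field_simp
          linear_combination -hprod
        rw [← heq2] at *
        exact hd.hasDerivWithinAt
    · have heq3 : (fun t => A * Real.sqrt (1 - t) - C * Real.sqrt (1 - t))
          = fun t => (A - C) * Real.sqrt (1 - t) := funext fun t => by ring
      rw [heq3]
      have hcont : Continuous (fun t : ℝ => (A - C) * Real.sqrt (1 - t)) :=
        continuous_const.mul (Real.continuous_sqrt.comp (continuous_const.sub continuous_id))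
      have h2 := hcont.tendsto 1
      simp only [sub_self, Real.sqrt_zero, mul_zero] at h2
      exact h2.mono_left nhdsWithin_le_nhds
    · have hconst : ∀ s, Real.exp (s / 2) * (A * Real.sqrt (1 - (1 - Real.exp (-s)))) = A := by
        intro s
        rw [show (1:ℝ) - (1 - Real.exp (-s)) = Real.exp (-s) from by ring, ← Real.exp_half]
        calc Real.exp (s/2) * (A * Real.exp (-s/2))
            = A * (Real.exp (s/2) * Real.exp (-s/2)) := by ring
          _ = A := by
              rw [← Real.exp_add, show s / 2 + -s / 2 = (0:ℝ) by ring, Real.exp_zero, mul_one]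
      intro a _ b _ _
      simp only [hconst]
      exact le_refl A
    · have hconst : ∀ s, Real.exp (s / 2) * (A * Real.sqrt (1 - (1 - Real.exp (-s)))) = A := by
        intro s
        rw [show (1:ℝ) - (1 - Real.exp (-s)) = Real.exp (-s) from by ring, ← Real.exp_half]
        calc Real.exp (s/2) * (A * Real.exp (-s/2))
            = A * (Real.exp (s/2) * Real.exp (-s/2)) := by ring
          _ = A := by
              rw [← Real.exp_add, show s / 2 + -s / 2 = (0:ℝ) by ring, Real.exp_zero, mul_one]
      have : (fun s => Real.exp (s / 2) * (A * Real.sqrt (1 - (1 - Real.exp (-s))))) = fun _ => A :=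
        funext hconst
      rw [this]
      exact tendsto_const_nhds
  · exact aux_main A B C x hB hBA hAC hsum hprod hlt hxC
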